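/- Let γ : ℝ → ℝ be a variogram such that γ(x) = 0 for all x in some interval [α, α + ε] with α ∈ ℝ and ε > 0. Then γ is identically zero on ℝ. -/

import Mathlib

open scoped BigOperators

/-- A variogram on ℝ: nonnegative at the origin, even, and conditionally negative
definite (for complex weights summing to zero, the quadratic form is real and ≤ 0). -/
def IsVariogram1 (γ : ℝ → ℝ) : Prop :=
  0 ≤ γ 0 ∧ (∀ x, γ (-x) = γ x) ∧
    ∀ (n : ℕ) (x : Fin n → ℝ) (a : Fin n → ℂ),
      (∑ i, a i) = 0 →
      (∑ i, ∑ j, a i * (γ (x i - x j) : ℂ) * (starRingEnd ℂ) (a j)).im = 0 ∧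
      (∑ i, ∑ j, a i * (γ (x i - x j) : ℂ) * (starRingEnd ℂ) (a j)).re ≤ 0

/-- A variogram on ℝ vanishing on some interval [α, α + ε] with ε > 0 is identically
zero. -/
theorem stmt14 (γ : ℝ → ℝ) (hγ : IsVariogram1 γ) (α ε : ℝ) (hε : 0 < ε)
    (h0 : ∀ x ∈ Set.Icc α (α + ε), γ x = 0) :
    ∀ x : ℝ, γ x = 0 := by
  obtain ⟨h00, heven, hQ⟩ := hγ
  -- γ 0 ≤ γ x for all x
  have hmono : ∀ x : ℝ, γ 0 ≤ γ x := by
    intro x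
    have := (hQ 2 ![0, x] ![1, -1] (by simp)).2
    simp [Fin.sum_univ_two, sub_self, zero_sub, sub_zero, heven,
      Complex.add_re, Complex.ofReal_re] at this
    linarith
  have hα : γ α = 0 := h0 α ⟨le_refl _, by linarith⟩
  have h0z : γ 0 = 0 := le_antisymm (hα ▸ hmono α) h00
  -- additivity of the zero set
  have hadd : ∀ x y : ℝ, γ x = 0 → γ y = 0 → γ (x + y) = 0 := by
    intro x y hx hy
    have := (hQ 3 ![0, x, x + y] ![1, -2, 1] (by rw [Fin.sum_univ_three]; show (1:ℂ) + -2 + 1 = 0; norm_num)).2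
    have hxy : x + y - x = y := by ring
    have h5 : γ (-y + -x) = γ (x + y) := by
      rw [show -y + -x = -(x + y) by ring, heven]
    simp [Fin.sum_univ_three, sub_self, zero_sub, sub_zero, heven, hxy, h5,
      hx, hy, h0z, Complex.add_re, Complex.ofReal_re] at this
    have hge := hmono (x + y)
    rw [h0z] at hge
    linarith
  have hnegz : ∀ x : ℝ, γ x = 0 → γ (-x) = 0 := fun x hx => (heven x).trans hx
  -- zero on [0, ε]
  have hsmall : ∀ s : ℝ, 0 ≤ s → s ≤ ε → γ s = 0 := by
    intro s hs hsε
    have h1 : γ (α + s) = 0 := h0 _ ⟨by linarith, by linarith⟩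
    have h2' : γ (-α) = 0 := (heven α).trans hα
    have := hadd (α + s) (-α) h1 h2'
    simpa using this
  -- zero for n * s
  have hmul : ∀ (n : ℕ) (s : ℝ), γ s = 0 → γ (n * s) = 0 := by
    intro n s hs
    induction n with
    | zero => simpa using h0z
    | succ k ih =>
      have := hadd (k * s) s ih hs
      have e : (k : ℝ) * s + s = ((k + 1 : ℕ) : ℝ) * s := by push_cast; ring
      rwa [e] at this
  -- conclude for nonneg x
  have hpos : ∀ x : ℝ, 0 ≤ x → γ x = 0 := by
    intro x hx
    set n : ℕ := ⌈x / ε⌉₊ + 1 with hn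
    have hnpos : (0 : ℝ) < n := by positivity
    have hle : x / ε ≤ n := by
      push_cast
      exact le_trans (Nat.le_ceil _) (by rw [hn, Nat.cast_add, Nat.cast_one]; linarith)
    have hs1 : 0 ≤ x / n := by positivity
    have hs2 : x / n ≤ ε := by
      rw [div_le_iff₀ hnpos]
      rw [div_le_iff₀ hε] at hle
      linarith
    have := hmul n (x / n) (hsmall _ hs1 hs2)
    rwa [mul_div_cancel₀ _ (ne_of_gt hnpos)] at this
  intro x
  rcases le_total 0 x with h | h
  · exact hpos x h
  · rw [← heven x] at *
    exact hpos (-x) (by linarith)
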